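/- Let (X,T) be a complex linear dynamical system and let x ∈ Rec(T) be a recurrent vector for T. Then x ∈ span(E(T)) if and only if span{T^n x : n ∈ ℕ₀} is finite-dimensional, where E(T) = {y ∈ X \ {0} : Ty = λy for some λ ∈ ℂ with |λ| = 1} is the set of unimodular eigenvectors of T. -/

import Mathlib

open Filter Topology Set DirectSum

/-- A point `x` is recurrent for `T` if `x` belongs to the closure of `{T^n x : n ≥ 1}`. -/
def RecPt {X : Type*} [TopologicalSpace X] (T : X → X) (x : X) : Prop :=
  x ∈ closure (Set.range fun n : ℕ => T^[n + 1] x)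

/-- The set of unimodular eigenvectors of `T`. -/
def unimodEigenvectors {X : Type*} [AddCommGroup X] [Module ℂ X] (T : X → X) : Set X :=
  {y : X | y ≠ 0 ∧ ∃ lam : ℂ, ‖lam‖ = 1 ∧ T y = lam • y}

set_option linter.unusedSectionVars false
set_option linter.unusedVariables false



section Core
variable {M : Type*} [AddCommGroup M] [Module ℂ M] [TopologicalSpace M]
    [IsTopologicalAddGroup M] [ContinuousSMul ℂ M] [T2Space M] [FiniteDimensional ℂ M]

/-- Binomial expansion of powers of `S` against a nilpotent part. -/
lemma pow_eq_sum_smul (S : Module.End ℂ M) (μ : ℂ) (m : ℕ) :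
    S ^ m = ∑ i ∈ Finset.range (m + 1),
      ((m.choose i : ℂ) * μ ^ (m - i)) • (S - μ • 1) ^ i := by
  set N := S - μ • (1 : Module.End ℂ M) with hN
  have hS : S = N + μ • 1 := by rw [hN]; abel
  have hcomm : Commute N (μ • (1 : Module.End ℂ M)) := (Commute.one_right N).smul_right μ
  rw [hS, hcomm.add_pow]
  refine Finset.sum_congr rfl fun i hi => ?_
  have h1 : (μ • (1 : Module.End ℂ M)) ^ (m - i) = μ ^ (m - i) • 1 := by
    rw [smul_pow, one_pow]
  have h2 : ((m.choose i : ℕ) : Module.End ℂ M) = ((m.choose i : ℂ)) • 1 := by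
    rw [← Algebra.algebraMap_eq_smul_one, map_natCast]
  rw [h1, h2]
  rw [mul_smul_comm, mul_smul_comm, mul_one, mul_one, smul_smul, mul_comm]

set_option linter.unusedSectionVars false

lemma pow_apply_eq_sum (S : Module.End ℂ M) (μ : ℂ) (v : M) (p m : ℕ) :
    ((S - μ • 1) ^ p) ((S ^ m) v) = ∑ i ∈ Finset.range (m + 1),
      ((m.choose i : ℂ) * μ ^ (m - i)) • ((S - μ • 1) ^ (p + i)) v := by
  rw [pow_eq_sum_smul S μ m, LinearMap.sum_apply, map_sum]
  refine Finset.sum_congr rfl fun i hi => ?_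
  rw [LinearMap.smul_apply, map_smul, pow_add, Module.End.mul_apply]

/-- core lemma: a generalized eigenvector which is "recurrent" along a sequence of times
tending to infinity is zero or a unimodular eigenvector. -/
lemma aux_core (S : Module.End ℂ M) (μ : ℂ) (v : M)
    (hv : v ∈ S.maxGenEigenspace μ)
    (n : ℕ → ℕ) (hn : Tendsto n atTop atTop) (hpos : ∀ j, 1 ≤ n j)
    (hlim : Tendsto (fun j => (S ^ (n j)) v) atTop (𝓝 v)) :
    v = 0 ∨ (‖μ‖ = 1 ∧ S v = μ • v) := by
  classical
  set N := S - μ • (1 : Module.End ℂ M) with hNdef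
  have hex : ∃ k : ℕ, (N ^ k) v = 0 := (Module.End.mem_maxGenEigenspace S μ v).1 hv
  have hkv : (N ^ Nat.find hex) v = 0 := Nat.find_spec hex
  rcases hfind : Nat.find hex with _ | k'
  · rw [hfind] at hkv; left; simpa using hkv
  rw [hfind] at hkv
  set w := (N ^ k') v with hwdef
  have hw : w ≠ 0 := Nat.find_min hex (by omega)
  have hNw : N w = 0 := by
    rw [hwdef, ← Module.End.mul_apply, ← pow_succ']
    exact hkv
  -- the one-term identity
  have hone : ∀ m : ℕ, (N ^ k') ((S ^ m) v) = μ ^ m • w := by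
    intro m
    rw [hNdef, pow_apply_eq_sum S μ v k' m]
    rw [Finset.sum_eq_single_of_mem 0 (Finset.mem_range.2 (by omega))]
    · simp [hwdef, hNdef]
    · intro i hi hi0
      have : (N ^ (k' + i)) v = 0 := by
        have : N ^ (k' + i) = N ^ (i - 1) * N ^ (k' + 1) := by
          rw [← pow_add]; congr 1; omega
        rw [this, Module.End.mul_apply, hkv, map_zero]
      rw [← hNdef, this, smul_zero]
  -- push the limit through the continuous map `N ^ k'`
  have hcont : Continuous (⇑(N ^ k')) := (N ^ k').continuous_of_finiteDimensional
  have hlimw : Tendsto (fun j => μ ^ (n j) • w) atTop (𝓝 w) := by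
    have := (hcont.tendsto v).comp hlim
    simpa [Function.comp_def, hone] using this
  -- |μ| = 1
  have habs : ‖μ‖ = 1 := by
    rcases lt_trichotomy ‖μ‖ 1 with h | h | h
    · exfalso
      have hμ0 : Tendsto (fun j => μ ^ (n j)) atTop (𝓝 0) :=
        (tendsto_pow_atTop_nhds_zero_of_norm_lt_one (by simpa using h)).comp hn
      have : Tendsto (fun j => μ ^ (n j) • w) atTop (𝓝 ((0 : ℂ) • w)) :=
        hμ0.smul tendsto_const_nhds
      have := tendsto_nhds_unique hlimw this
      simp at this; exact hw this
    · exact h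
    · exfalso
      have hμne : μ ≠ 0 := by
        intro h0; rw [h0] at h; simp at h; linarith
      have hinv : Tendsto (fun j => (μ⁻¹) ^ (n j)) atTop (𝓝 0) := by
        refine (tendsto_pow_atTop_nhds_zero_of_norm_lt_one ?_).comp hn
        rw [norm_inv]
        rw [inv_lt_one_iff₀]; right; simpa using h
      have heq : ∀ j, (μ⁻¹) ^ (n j) • (μ ^ (n j) • w) = w := by
        intro j
        rw [smul_smul, ← mul_pow, inv_mul_cancel₀ hμne, one_pow, one_smul]
      have : Tendsto (fun j => (μ⁻¹) ^ (n j) • (μ ^ (n j) • w)) atTop (𝓝 ((0:ℂ) • w)) :=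
        hinv.smul hlimw
      rw [show ((0:ℂ) • w) = 0 by simp] at this
      have hconst : Tendsto (fun _ : ℕ => w) atTop (𝓝 (0 : M)) := this.congr fun j => heq j
      exact hw (tendsto_nhds_unique tendsto_const_nhds hconst)
  right
  refine ⟨habs, ?_⟩
  have hμne : μ ≠ 0 := by intro h; rw [h] at habs; simp at habs
  have hk'0 : k' = 0 := by
    by_contra hne
    obtain ⟨k'', rfl⟩ : ∃ k'', k' = k'' + 1 := ⟨k' - 1, by omega⟩
    set u := (N ^ k'') v with hudef
    have htwo : ∀ m : ℕ, 1 ≤ m → (N ^ k'') ((S ^ m) v) =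
        μ ^ m • u + ((m : ℂ) * μ ^ (m - 1)) • w := by
      intro m hm
      rw [hNdef, pow_apply_eq_sum S μ v k'' m, ← hNdef]
      have hsub : Finset.range 2 ⊆ Finset.range (m + 1) := Finset.range_subset_range.2 (by omega)
      rw [← Finset.sum_subset hsub ?_]
      · rw [Finset.sum_range_succ, Finset.sum_range_one]
        simp [hudef, hwdef, Nat.choose_one_right]
      · intro i hi hi2
        have hz : (N ^ (k'' + i)) v = 0 := by
          have h3 : N ^ (k'' + i) = N ^ (i - 2) * N ^ (k'' + 2) := by
            rw [← pow_add]; congr 1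
            simp only [Finset.mem_range] at hi hi2; omega
          rw [h3, Module.End.mul_apply,
            (show (N ^ (k'' + 2)) v = 0 from hkv), map_zero]
        rw [hz, smul_zero]
    have hcont2 : Continuous (⇑(N ^ k'')) := (N ^ k'').continuous_of_finiteDimensional
    have hlimu : Tendsto (fun j => μ ^ (n j) • u + ((n j : ℂ) * μ ^ (n j - 1)) • w)
        atTop (𝓝 u) := by
      have h4 := (hcont2.tendsto v).comp hlim
      exact h4.congr fun j => htwo (n j) (hpos j)
    set e : ℕ → ℂ := fun j => (n j : ℂ) * μ ^ (n j - 1) with hedef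
    have hene : ∀ j, e j ≠ 0 := fun j =>
      mul_ne_zero (Nat.cast_ne_zero.2 (by have := hpos j; omega)) (pow_ne_zero _ hμne)
    have hwe : ∀ j, w = (e j)⁻¹ • (μ ^ (n j) • u + e j • w) - ((e j)⁻¹ * μ ^ (n j)) • u := by
      intro j
      rw [smul_add, smul_smul ((e j)⁻¹) (e j) w, inv_mul_cancel₀ (hene j), one_smul,
        smul_smul ((e j)⁻¹) (μ ^ (n j)) u]
      abel
    have habse : ∀ j, ‖(e j)⁻¹‖ = ((n j : ℝ))⁻¹ := by
      intro j
      rw [norm_inv, hedef]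
      simp [map_mul, map_pow, habs]
    have hninv : Tendsto (fun j => ((n j : ℝ))⁻¹) atTop (𝓝 0) :=
      tendsto_inv_atTop_zero.comp (tendsto_natCast_atTop_atTop.comp hn)
    have hinve : Tendsto (fun j => (e j)⁻¹) atTop (𝓝 0) := by
      rw [tendsto_zero_iff_norm_tendsto_zero]
      refine hninv.congr fun j => ?_
      rw [← habse j]
    have hterm1 : Tendsto (fun j => (e j)⁻¹ • (μ ^ (n j) • u + e j • w)) atTop (𝓝 (0 : M)) := by
      have h5 := hinve.smul hlimu
      simpa using h5
    have hterm2 : Tendsto (fun j => ((e j)⁻¹ * μ ^ (n j)) • u) atTop (𝓝 (0 : M)) := by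
      have hc : Tendsto (fun j => (e j)⁻¹ * μ ^ (n j)) atTop (𝓝 (0 : ℂ)) := by
        rw [tendsto_zero_iff_norm_tendsto_zero]
        refine hninv.congr fun j => ?_
        rw [norm_mul, habse j, norm_pow, habs, one_pow, mul_one]
      simpa using hc.smul (tendsto_const_nhds : Tendsto (fun _ : ℕ => u) atTop (𝓝 u))
    have hlim0 : Tendsto (fun _ : ℕ => w) atTop (𝓝 (0 : M)) := by
      have h6 := hterm1.sub hterm2
      rw [sub_zero] at h6
      exact h6.congr fun j => (hwe j).symm
    exact hw (tendsto_nhds_unique tendsto_const_nhds hlim0)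
  have hNv : N v = 0 := by
    have h7 := hkv
    rw [hk'0] at h7
    simpa using h7
  rw [hNdef, LinearMap.sub_apply, LinearMap.smul_apply, Module.End.one_apply,
    sub_eq_zero] at hNv
  exact hNv
end Core




section Easy
variable {X : Type*} [AddCommGroup X] [Module ℂ X]

lemma iterate_add_apply' (f : X →ₗ[ℂ] X) (n : ℕ) (y z : X) :
    (⇑f)^[n] (y + z) = (⇑f)^[n] y + (⇑f)^[n] z := by
  induction n with
  | zero => rfl
  | succ n ih => simp [Function.iterate_succ_apply', ih]

lemma iterate_smul_apply' (f : X →ₗ[ℂ] X) (n : ℕ) (c : ℂ) (y : X) :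
    (⇑f)^[n] (c • y) = c • (⇑f)^[n] y := by
  induction n with
  | zero => rfl
  | succ n ih => simp [Function.iterate_succ_apply', ih]

lemma findim_orbit_span (f : X →ₗ[ℂ] X) (x : X)
    (hx : x ∈ Submodule.span ℂ (unimodEigenvectors ⇑f)) :
    FiniteDimensional ℂ (Submodule.span ℂ (Set.range fun n : ℕ => (⇑f)^[n] x)) := by
  induction hx using Submodule.span_induction with
  | mem y hy =>
      obtain ⟨hy0, lam, hlam, hfy⟩ := hy
      have horb : ∀ n : ℕ, (⇑f)^[n] y = lam ^ n • y := by
        intro n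
        induction n with
        | zero => simp
        | succ n ih =>
            rw [Function.iterate_succ_apply', ih, map_smul, hfy, smul_smul, pow_succ,
              mul_comm]
      have hle : Submodule.span ℂ (Set.range fun n : ℕ => (⇑f)^[n] y) ≤ ℂ ∙ y := by
        rw [Submodule.span_le]
        rintro _ ⟨n, rfl⟩
        dsimp only
        rw [horb n]
        exact Submodule.smul_mem _ _ (Submodule.mem_span_singleton_self y)
      exact Submodule.finiteDimensional_of_le hle
  | zero =>
      have hle : Submodule.span ℂ (Set.range fun n : ℕ => (⇑f)^[n] (0:X)) ≤ ℂ ∙ (0:X) := by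
        rw [Submodule.span_le]
        rintro _ ⟨n, rfl⟩
        dsimp only
        rw [Function.iterate_fixed (map_zero f) n]
        exact Submodule.mem_span_singleton_self 0
      exact Submodule.finiteDimensional_of_le hle
  | add y z hy hz ihy ihz =>
      have := ihy; have := ihz
      have hle : Submodule.span ℂ (Set.range fun n : ℕ => (⇑f)^[n] (y + z)) ≤
          Submodule.span ℂ (Set.range fun n : ℕ => (⇑f)^[n] y) ⊔
          Submodule.span ℂ (Set.range fun n : ℕ => (⇑f)^[n] z) := by
        rw [Submodule.span_le]
        rintro _ ⟨n, rfl⟩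
        dsimp only
        rw [iterate_add_apply' f n y z]
        exact Submodule.add_mem _
          (Submodule.mem_sup_left (Submodule.subset_span ⟨n, rfl⟩))
          (Submodule.mem_sup_right (Submodule.subset_span ⟨n, rfl⟩))
      exact Submodule.finiteDimensional_of_le hle
  | smul c y hy ihy =>
      have := ihy
      have hle : Submodule.span ℂ (Set.range fun n : ℕ => (⇑f)^[n] (c • y)) ≤
          Submodule.span ℂ (Set.range fun n : ℕ => (⇑f)^[n] y) := by
        rw [Submodule.span_le]
        rintro _ ⟨n, rfl⟩
        dsimp only
        rw [iterate_smul_apply' f n c y]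
        exact Submodule.smul_mem _ _ (Submodule.subset_span ⟨n, rfl⟩)
      exact Submodule.finiteDimensional_of_le hle
end Easy




section Seq
variable {X : Type*} [TopologicalSpace X] [PolishSpace X]

lemma exists_return_sequence (T : X → X) (x : X) (hx : RecPt T x) :
    ∃ n : ℕ → ℕ, (∀ j, j + 1 ≤ n j) ∧ Tendsto (fun j => T^[n j] x) atTop (𝓝 x) := by
  letI := TopologicalSpace.upgradeIsCompletelyMetrizable X
  have hclos : ∀ N : ℕ, x ∈ closure ((fun n => T^[n] x) '' {m | N + 1 ≤ m}) := by
    intro N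
    by_cases hper : ∃ m, 1 ≤ m ∧ T^[m] x = x
    · obtain ⟨m, hm1, hmx⟩ := hper
      apply subset_closure
      refine ⟨m * (N + 1), ?_, ?_⟩
      · simp only [mem_setOf_eq]; nlinarith
      · show T^[m * (N + 1)] x = x
        rw [Function.iterate_mul]
        exact Function.iterate_fixed hmx _
    · have hsplit : Set.range (fun n : ℕ => T^[n + 1] x) =
          ((fun n => T^[n] x) '' (Set.Icc 1 N)) ∪ ((fun n => T^[n] x) '' {m | N + 1 ≤ m}) := by
        ext y
        constructor
        · rintro ⟨n, rfl⟩
          by_cases h : n + 1 ≤ N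
          · exact Or.inl ⟨n + 1, ⟨by omega, h⟩, rfl⟩
          · exact Or.inr ⟨n + 1, by simp only [mem_setOf_eq]; omega, rfl⟩
        · rintro (⟨m, ⟨hm1, _⟩, rfl⟩ | ⟨m, hm, rfl⟩)
          · exact ⟨m - 1, by dsimp only; congr 1; omega⟩
          · simp only [mem_setOf_eq] at hm
            exact ⟨m - 1, by dsimp only; congr 1; omega⟩
      have hx' : x ∈ closure (Set.range fun n : ℕ => T^[n + 1] x) := hx
      rw [hsplit, closure_union] at hx'
      rcases hx' with h | h
      · exfalso
        have hfin : ((fun n => T^[n] x) '' (Set.Icc 1 N)).Finite :=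
          (Set.finite_Icc 1 N).image _
        rw [hfin.isClosed.closure_eq] at h
        obtain ⟨m, ⟨hm1, _⟩, hmx⟩ := h
        exact hper ⟨m, hm1, hmx⟩
      · exact h
  have hchoice : ∀ j : ℕ, ∃ m : ℕ, j + 1 ≤ m ∧ dist (T^[m] x) x < 1 / ((j : ℝ) + 1) := by
    intro j
    have h := (Metric.mem_closure_iff.1 (hclos j)) (1 / ((j : ℝ) + 1)) (by positivity)
    obtain ⟨y, ⟨m, hm, rfl⟩, hdist⟩ := h
    exact ⟨m, hm, by rwa [dist_comm]⟩
  choose n hn1 hn2 using hchoice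
  refine ⟨n, hn1, ?_⟩
  rw [tendsto_iff_dist_tendsto_zero]
  exact squeeze_zero (fun j => dist_nonneg) (fun j => le_of_lt (hn2 j))
    tendsto_one_div_add_atTop_nhds_zero_nat
end Seq

/-- For a recurrent vector `x` of a continuous linear operator on a separable
infinite-dimensional complex F-space, `x` lies in the span of the unimodular
eigenvectors iff the span of its orbit is finite-dimensional. -/
theorem stmt17 {X : Type*} [AddCommGroup X] [Module ℂ X] [TopologicalSpace X]
    [IsTopologicalAddGroup X] [ContinuousSMul ℂ X] [PolishSpace X]
    (hX : ¬ FiniteDimensional ℂ X)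
    (T : X →L[ℂ] X) (x : X) (hx : RecPt (⇑T) x) :
    x ∈ Submodule.span ℂ (unimodEigenvectors (⇑T)) ↔
      FiniteDimensional ℂ
        (Submodule.span ℂ (Set.range fun n : ℕ => (⇑T)^[n] x)) := by
  classical
  constructor
  · intro hx_span
    exact findim_orbit_span (T : X →ₗ[ℂ] X) x hx_span
  · intro hfd
    set M : Submodule ℂ X := Submodule.span ℂ (Set.range fun n : ℕ => (⇑T)^[n] x) with hM
    haveI : FiniteDimensional ℂ ↥M := hfd
    have hmapsT : ∀ y ∈ M, T y ∈ M := by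
      intro y hy
      have hle : Submodule.map (T : X →ₗ[ℂ] X) M ≤ M := by
        rw [hM, Submodule.map_span, Submodule.span_le]
        rintro _ ⟨_, ⟨k, rfl⟩, rfl⟩
        dsimp only
        apply Submodule.subset_span
        refine ⟨k + 1, ?_⟩
        show (⇑T)^[k + 1] x = T ((⇑T)^[k] x)
        rw [Function.iterate_succ_apply']
      exact hle ⟨y, hy, rfl⟩
    set S : Module.End ℂ ↥M := (T : X →ₗ[ℂ] X).restrict hmapsT with hS
    have hSval : ∀ (m : ↥M) (k : ℕ), (((S ^ k) m : ↥M) : X) = (⇑T)^[k] (m : X) := by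
      intro m k
      induction k with
      | zero => simp
      | succ k ih =>
          rw [pow_succ', Module.End.mul_apply, Function.iterate_succ_apply']
          rw [hS, LinearMap.restrict_coe_apply, ih]
          rfl
    have hxM : x ∈ M := Submodule.subset_span ⟨0, rfl⟩
    set x' : ↥M := ⟨x, hxM⟩ with hx'
    obtain ⟨n, hn1, hnlim⟩ := exists_return_sequence (⇑T) x hx
    have hn : Tendsto n atTop atTop :=
      tendsto_atTop_mono (fun j => by simpa using Nat.le_of_succ_le (hn1 j)) tendsto_id
    have hlimM : Tendsto (fun j => (S ^ (n j)) x') atTop (𝓝 x') := by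
      rw [tendsto_subtype_rng]
      exact hnlim.congr fun j => (hSval x' (n j)).symm
    set A : ℂ → Submodule ℂ ↥M := S.maxGenEigenspace with hA
    have hInt : DirectSum.IsInternal A :=
      DirectSum.isInternal_submodule_of_iSupIndep_of_iSup_eq_top
        S.independent_maxGenEigenspace S.iSup_maxGenEigenspace_eq_top
    set e : (⨁ (ν : ℂ), ↥(A ν)) ≃ₗ[ℂ] ↥M :=
      LinearEquiv.ofBijective (DirectSum.coeLinearMap A) hInt with he
    set π : ℂ → (↥M →ₗ[ℂ] ↥M) := fun μ =>
      (A μ).subtype ∘ₗ (DirectSum.component ℂ ℂ (fun ν => ↥(A ν)) μ) ∘ₗ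
        (e.symm : ↥M →ₗ[ℂ] (⨁ (ν : ℂ), ↥(A ν))) with hπ
    have hπ_apply : ∀ (μ : ℂ) (m : ↥M), π μ m = ((e.symm m) μ : ↥M) := fun μ m => rfl
    have hπmem : ∀ (μ : ℂ) (m : ↥M), π μ m ∈ A μ := by
      intro μ m; rw [hπ_apply]; exact Submodule.coe_mem _
    have hπ_same : ∀ (μ : ℂ) (v : ↥M), v ∈ A μ → π μ v = v := by
      intro μ v hv
      rw [hπ_apply, hInt.ofBijective_coeLinearMap_of_mem hv]
    have hπ_ne : ∀ (μ ν : ℂ) (v : ↥M), v ∈ A ν → ν ≠ μ → π μ v = 0 := by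
      intro μ ν v hv hne
      rw [hπ_apply, hInt.ofBijective_coeLinearMap_of_mem_ne hne hv]
      rfl
    have hπS : ∀ (μ : ℂ) (m : ↥M), π μ (S m) = S (π μ m) := by
      intro μ m
      have hm : m ∈ ⨆ ν : ℂ, A ν := by
        rw [hA, S.iSup_maxGenEigenspace_eq_top]; trivial
      refine Submodule.iSup_induction (motive := fun m => π μ (S m) = S (π μ m)) A hm ?_ ?_ ?_
      · intro ν v hv
        show π μ (S v) = S (π μ v)
        have hSv : S v ∈ A ν :=
          Module.End.mapsTo_maxGenEigenspace_of_comm (Commute.refl S) ν hv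
        by_cases hνμ : ν = μ
        · subst hνμ
          rw [hπ_same _ _ hSv, hπ_same _ _ hv]
        · rw [hπ_ne μ ν _ hSv hνμ, hπ_ne μ ν _ hv hνμ, map_zero]
      · show π μ (S 0) = S (π μ 0)
        rw [map_zero, map_zero, map_zero]
      · intro a b ha hb
        show π μ (S (a + b)) = S (π μ (a + b))
        rw [map_add, map_add, ha, hb, ← map_add, ← map_add]
    have hπSn : ∀ (μ : ℂ) (k : ℕ) (m : ↥M), π μ ((S ^ k) m) = (S ^ k) (π μ m) := by
      intro μ k
      induction k with
      | zero => intro m; simp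
      | succ k ih =>
          intro m
          rw [pow_succ', Module.End.mul_apply, hπS, ih, Module.End.mul_apply]
    have hsum : x' = ∑ μ ∈ (e.symm x').support, π μ x' := by
      have h8 : (e.symm x').sum (fun μ (v : ↥(A μ)) => (v : ↥M)) = x' := by
        have h9 := e.apply_symm_apply x'
        change DirectSum.coeLinearMap A (e.symm x') = x' at h9
        rwa [DirectSum.coeLinearMap_eq_dfinsuppSum] at h9
      rw [DFinsupp.sum] at h8
      calc x' = ∑ μ ∈ (e.symm x').support, ((e.symm x') μ : ↥M) := h8.symm
        _ = ∑ μ ∈ (e.symm x').support, π μ x' :=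
          Finset.sum_congr rfl fun μ _ => (hπ_apply μ x').symm
    have hgoal : ∀ μ : ℂ, ((π μ x' : ↥M) : X) ∈
        Submodule.span ℂ (unimodEigenvectors (⇑T)) := by
      intro μ
      set v : ↥M := π μ x' with hv
      have hcont : Continuous (π μ) := (π μ).continuous_of_finiteDimensional
      have hrec : Tendsto (fun j => (S ^ (n j)) v) atTop (𝓝 v) := by
        have h9 := (hcont.tendsto x').comp hlimM
        exact h9.congr fun j => by
          simp only [Function.comp_apply]; rw [hπSn]
      rcases aux_core S μ v (hπmem μ x') n hn (fun j => by have := hn1 j; omega) hrec with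
        h0 | ⟨habs, heig⟩
      · rw [h0]
        simp only [ZeroMemClass.coe_zero]
        exact Submodule.zero_mem _
      · by_cases hv0 : (v : X) = 0
        · rw [hv0]; exact Submodule.zero_mem _
        · apply Submodule.subset_span
          refine ⟨hv0, μ, habs, ?_⟩
          have h10 : (↑(S v) : X) = T ↑v := by
            rw [hS, LinearMap.restrict_coe_apply]; rfl
          show T ↑v = μ • ↑v
          rw [← h10, heig]
          rfl
    have hxcoe : x = (x' : X) := rfl
    rw [hxcoe, hsum]
    rw [AddSubmonoidClass.coe_finset_sum]
    exact Submodule.sum_mem _ fun μ _ => hgoal μ
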